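/- Let D be a dense complex linear subspace of a complex Hilbert space H and let {H_t}_{t∈ℝ} be a family of linear maps H_t : D → H each of which is symmetric on D (i.e. ⟨ψ|H_tφ⟩ = ⟨H_tψ|φ⟩ for all ψ, φ ∈ D). Let ψ : ℝ → H be differentiable with ψ(t) ∈ D for all t, and fix t ∈ ℝ. Then ψ'(t) = −i·H_t ψ(t) if and only if for every φ ∈ D one has ω(ψ'(t), φ) = Im⟨ψ'(t)|φ⟩ = Re⟨H_tψ(t)|φ⟩. That is, ψ satisfies the t-dependent Schrödinger equation at t exactly when it satisfies Hamilton's equation for the Hamiltonian function (1/2)·Re⟨ψ|H_tψ⟩ relative to the canonical symplectic form. -/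

import Mathlib

open scoped ComplexInnerProductSpace

/-- Let `{H_t}` be a family of symmetric operators on a dense complex subspace `D` of a
complex Hilbert space `H` and let `ψ : ℝ → H` be a differentiable curve taking values in `D`.
Then, at a fixed time `t`, `ψ` satisfies the `t`-dependent Schrödinger equation
`ψ'(t) = −i·H_t ψ(t)` if and only if for every `φ ∈ D` one has
`ω(ψ'(t), φ) = Im⟨ψ'(t)|φ⟩ = Re⟨H_tψ(t)|φ⟩`, i.e. Hamilton's equation for the Hamiltonian
function `(1/2)·Re⟨ψ|H_tψ⟩` relative to the canonical symplectic form. -/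
theorem schrodinger_iff_hamilton
    {H : Type*} [NormedAddCommGroup H] [InnerProductSpace ℂ H] [CompleteSpace H]
    (D : Submodule ℂ H) (hD : Dense (D : Set H))
    (Ht : ℝ → (D →ₗ[ℂ] H))
    (hsym : ∀ (t : ℝ) (ψ φ : D), ⟪(ψ : H), Ht t φ⟫ = ⟪Ht t ψ, (φ : H)⟫)
    (ψ : ℝ → H) (hmem : ∀ t : ℝ, ψ t ∈ D)
    (ψ' : ℝ → H) (hdiff : ∀ s : ℝ, HasDerivAt ψ (ψ' s) s)
    (t : ℝ) :
    ψ' t = (-Complex.I) • (Ht t ⟨ψ t, hmem t⟩) ↔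
      ∀ φ : D, (⟪ψ' t, (φ : H)⟫).im = (⟪Ht t ⟨ψ t, hmem t⟩, (φ : H)⟫).re := by
  set v : H := Ht t ⟨ψ t, hmem t⟩ with hv
  constructor
  · intro h φ
    rw [h, inner_smul_left]
    simp [Complex.ext_iff, Complex.mul_im]
  · intro h
    refine Dense.eq_of_inner_left ℂ hD (fun v' hv' => (?_ : ∀ φ : D, ⟪ψ' t, (φ : H)⟫ = ⟪(-Complex.I) • v, (φ : H)⟫) ⟨v', hv'⟩)
    intro φ
    have h1 := h φ
    have h2 := h (Complex.I • φ)
    rw [Submodule.coe_smul, inner_smul_right, inner_smul_right] at h2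
    simp only [Complex.mul_im, Complex.mul_re, Complex.I_re, Complex.I_im] at h2
    rw [inner_smul_left]
    apply Complex.ext <;>
      simp_all [Complex.ext_iff, Complex.mul_re, Complex.mul_im]
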